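/- For a sequence of B-counter operations, the maximal counter value reached (starting from 0, where i increments, r resets to 0, n does nothing) equals the maximal component of its counter profile: max over the defined entries among i⁺←, c_max, i⁺→ if a reset occurs, and i⁺← if no reset occurs. In particular the maximal counter value of a word equals that of its reverse. -/
import Mathlib


/-- Counter operations of B-automata / RPRS: increment, reset, no-op. -/
inductive Op : Type
  | inc | res | nop
deriving DecidableEq

/-- Counter profiles: triples `(i⁺←, c_max, i⁺→)` over `ℕ ∪ {⊥}`. -/
abbrev CP : Type := Option ℕ × Option ℕ × Option ℕ

/-- Order on `ℕ ∪ {⊥}`: numbers canonically, `⊥` only comparable with itself. -/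
def ole : Option ℕ → Option ℕ → Prop
  | some m, some n => m ≤ n
  | none, none => True
  | _, _ => False

/-- Component-wise order on counter profiles. -/
def le3 (p q : CP) : Prop := ole p.1 q.1 ∧ ole p.2.1 q.2.1 ∧ ole p.2.2 q.2.2

/-- Strict component-wise order on counter profiles. -/
def lt3 (p q : CP) : Prop := le3 p q ∧ ¬ le3 q p

/-- The list of numbers of increments in the blocks of a counter-operation
sequence delimited by resets (read left to right; always nonempty). -/
def blocks : List Op → List ℕ
  | [] => [0]
  | Op.inc :: w =>
      match blocks w with
      | [] => [1]
      | b :: bs => (b + 1) :: bs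
  | Op.nop :: w => blocks w
  | Op.res :: w => 0 :: blocks w

/-- The counter profile of a counter-operation sequence. -/
def Profile (w : List Op) : CP :=
  match blocks w with
  | [] => (some 0, none, none)
  | [b] => (some b, none, none)
  | b :: bs =>
      (some b,
       if 2 ≤ bs.length then some (bs.dropLast.foldr max 0) else none,
       some (bs.getLast!))

/-- A profile is valid if it arises from some counter-operation sequence. -/
def ValidCP (p : CP) : Prop := ∃ w : List Op, Profile w = p

/-- The neutral counter profile. -/
def cpOne : CP := (some 0, none, none)

/-- Concatenation of counter profiles (induced by word concatenation). -/
def pcomp : CP → CP → CP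
  | (a, _, none), (a', c', d') => (Option.map₂ (· + ·) a a', c', d')
  | (a, c, some d), (a', _, none) => (a, c, some (d + a'.getD 0))
  | (a, c, some d), (a', c', some d') =>
      (a, some (max (c.getD 0) (max (c'.getD 0) (d + a'.getD 0))), some d')

/-- Counter value after executing a sequence of counter operations
(starting from 0; `inc` adds 1, `res` resets to 0, `nop` does nothing). -/
def cval (w : List Op) : ℕ :=
  w.foldl (fun acc op =>
    match op with
    | Op.inc => acc + 1
    | Op.res => 0
    | Op.nop => acc) 0

/-- The maximal counter value reached during the execution of `w`:
maximum over all prefixes of `w` of the counter value after that prefix. -/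
def maxVal (w : List Op) : ℕ := (w.inits.map cval).foldr max 0

/-- The maximal defined entry of a counter profile. -/
def maxEntry (p : CP) : ℕ := max (p.1.getD 0) (max (p.2.1.getD 0) (p.2.2.getD 0))

/-! ### Auxiliary material -/

/-- The one-step counter update. -/
def fstep : ℕ → Op → ℕ := fun acc op =>
  match op with
  | Op.inc => acc + 1
  | Op.res => 0
  | Op.nop => acc

theorem cval_eq (w : List Op) : cval w = w.foldl fstep 0 := rfl

theorem blocks_ne_nil : ∀ w : List Op, blocks w ≠ [] := by
  intro w
  induction w with
  | nil => simp [blocks]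
  | cons a w ih =>
    cases a
    · cases h : blocks w with
      | nil => exact absurd h ih
      | cons b bs => simp [blocks, h]
    · simp [blocks]
    · simpa [blocks] using ih

theorem key : ∀ (w : List Op) (s : ℕ),
    ((w.inits.map (fun p => p.foldl fstep s)).foldr max 0)
      = max (s + (blocks w).headD 0) ((blocks w).tail.foldr max 0) := by
  intro w
  induction w with
  | nil => intro s; simp [blocks]
  | cons a w ih =>
    intro s
    rw [List.inits_cons]
    simp only [List.map_cons, List.map_map, List.foldr_cons, Function.comp_def,
      List.foldl_cons, List.foldl_nil]
    rw [ih (fstep s a)]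
    cases a
    · -- inc
      cases h : blocks w with
      | nil => exact absurd h (blocks_ne_nil w)
      | cons b bs =>
        simp only [blocks, h, fstep, List.headD_cons, List.tail_cons]
        omega
    · -- res
      cases h : blocks w with
      | nil => exact absurd h (blocks_ne_nil w)
      | cons b bs =>
        simp only [blocks, h, fstep, List.headD_cons, List.tail_cons, List.foldr_cons]
        omega
    · -- nop
      cases h : blocks w with
      | nil => exact absurd h (blocks_ne_nil w)
      | cons b bs =>
        simp only [blocks, h, fstep, List.headD_cons, List.tail_cons]
        omega

theorem maxVal_eq_foldr_blocks (w : List Op) :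
    maxVal w = (blocks w).foldr max 0 := by
  have hc : cval = fun p : List Op => p.foldl fstep 0 := funext cval_eq
  have : maxVal w = ((w.inits.map (fun p => p.foldl fstep 0)).foldr max 0) := by
    rw [maxVal, hc]
  rw [this, key w 0]
  cases h : blocks w with
  | nil => exact absurd h (blocks_ne_nil w)
  | cons b bs => simp

/-- Merging of block lists under concatenation. -/
def mer : List ℕ → List ℕ → List ℕ
  | [], l2 => l2
  | [a], [] => [a]
  | [a], h :: t => (a + h) :: t
  | a :: b :: l1, l2 => a :: mer (b :: l1) l2

theorem mer_concat : ∀ (l1 : List ℕ) (x : ℕ) (l2 : List ℕ),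
    mer (l1 ++ [x]) l2 = l1 ++ mer [x] l2 := by
  intro l1
  induction l1 with
  | nil => intro x l2; simp
  | cons a l1 ih =>
    intro x l2
    cases h : l1 ++ [x] with
    | nil => simp at h
    | cons b r =>
      have : mer (a :: (l1 ++ [x])) l2 = a :: mer (l1 ++ [x]) l2 := by
        rw [h]; rfl
      simp only [List.cons_append, this, ih]

theorem blocks_append : ∀ u v : List Op, blocks (u ++ v) = mer (blocks u) (blocks v) := by
  intro u
  induction u with
  | nil =>
    intro v
    cases h : blocks v with
    | nil => exact absurd h (blocks_ne_nil v)
    | cons b bs => simp [blocks, mer, h]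
  | cons a u ih =>
    intro v
    cases a
    · -- inc
      cases hu : blocks u with
      | nil => exact absurd hu (blocks_ne_nil u)
      | cons b bs =>
        cases bs with
        | nil =>
          cases hv : blocks v with
          | nil => exact absurd hv (blocks_ne_nil v)
          | cons c cs =>
            have h1 : blocks (u ++ v) = (b + c) :: cs := by
              rw [ih v, hu, hv]; rfl
            have h2 : blocks (Op.inc :: u) = [b + 1] := by
              simp [blocks, hu]
            show blocks (Op.inc :: (u ++ v)) = _
            rw [h2]
            simp only [blocks, h1, mer, hv]
            have : b + c + 1 = b + 1 + c := by omega
            rw [this]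
        | cons c cs =>
          have h1 : blocks (u ++ v) = b :: mer (c :: cs) (blocks v) := by
            rw [ih v, hu]; rfl
          have h2 : blocks (Op.inc :: u) = (b + 1) :: c :: cs := by
            simp [blocks, hu]
          show blocks (Op.inc :: (u ++ v)) = _
          rw [h2]
          simp only [blocks, h1, mer]
    · -- res
      cases hu : blocks u with
      | nil => exact absurd hu (blocks_ne_nil u)
      | cons b bs =>
        show (0 : ℕ) :: blocks (u ++ v) = mer (0 :: blocks u) (blocks v)
        rw [ih v, hu]
        rfl
    · -- nop
      show blocks (u ++ v) = mer (blocks u) (blocks v)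
      exact ih v

theorem blocks_single_inc : blocks [Op.inc] = [1] := rfl
theorem blocks_single_res : blocks [Op.res] = [0, 0] := rfl
theorem blocks_single_nop : blocks [Op.nop] = [0] := rfl

theorem blocks_reverse : ∀ w : List Op, blocks w.reverse = (blocks w).reverse := by
  intro w
  induction w with
  | nil => rfl
  | cons a w ih =>
    have hrev : (a :: w).reverse = w.reverse ++ [a] := by simp
    rw [hrev, blocks_append, ih]
    cases h : blocks w with
    | nil => exact absurd h (blocks_ne_nil w)
    | cons b bs =>
      have hb : (b :: bs).reverse = bs.reverse ++ [b] := by simp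
      rw [hb]
      cases a
      · rw [blocks_single_inc, mer_concat]
        have : blocks (Op.inc :: w) = (b + 1) :: bs := by simp [blocks, h]
        rw [this]
        simp [mer]
      · rw [blocks_single_res, mer_concat]
        have : blocks (Op.res :: w) = 0 :: b :: bs := by simp [blocks, h]
        rw [this]
        simp [mer]
      · rw [blocks_single_nop, mer_concat]
        have : blocks (Op.nop :: w) = b :: bs := by simp [blocks, h]
        rw [this, hb]
        simp [mer]

theorem foldr_max_concat : ∀ (l : List ℕ) (x : ℕ),
    (l ++ [x]).foldr max 0 = max (l.foldr max 0) x := by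
  intro l
  induction l with
  | nil => intro x; simp [Nat.max_comm]
  | cons a l ih => intro x; simp only [List.cons_append, List.foldr_cons, ih]; omega

theorem foldr_max_reverse : ∀ l : List ℕ, l.reverse.foldr max 0 = l.foldr max 0 := by
  intro l
  induction l with
  | nil => rfl
  | cons a l ih =>
    rw [List.reverse_cons, foldr_max_concat, ih]
    simp only [List.foldr_cons]
    omega

theorem getLast!_concat (l : List ℕ) (x : ℕ) : (l ++ [x]).getLast! = x := by
  induction l with
  | nil => rfl
  | cons a l ih =>
    rw [List.cons_append]
    cases h : l ++ [x] with
    | nil => simp at h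
    | cons b r =>
      rw [← h, show (a :: (l ++ [x])).getLast! = (l ++ [x]).getLast! by
        rw [h]; simp [List.getLast!, List.getLast_cons]]
      exact ih

theorem maxEntry_profile (w : List Op) :
    maxEntry (Profile w) = (blocks w).foldr max 0 := by
  unfold Profile
  cases h : blocks w with
  | nil => exact absurd h (blocks_ne_nil w)
  | cons b bs =>
    cases hbs : bs with
    | nil => simp [maxEntry]
    | cons c cs =>
      show maxEntry (some b,
          if 2 ≤ (c :: cs).length then some (((c :: cs).dropLast).foldr max 0) else none,
          some ((c :: cs).getLast!)) = (b :: c :: cs).foldr max 0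
      rcases List.eq_nil_or_concat (c :: cs) with h' | ⟨l, x, h'⟩
      · simp at h'
      · rw [List.concat_eq_append] at h'
        rw [h']
        have hdl : (l ++ [x]).dropLast = l := by simp
        have hgl : (l ++ [x]).getLast! = x := getLast!_concat l x
        simp only [maxEntry, hdl, hgl]
        rw [List.foldr_cons, foldr_max_concat]
        cases l with
        | nil =>
          simp
        | cons d ds =>
          have : 2 ≤ (d :: ds ++ [x]).length := by simp
          rw [if_pos this]
          simp only [Option.getD_some]

/-- The maximal counter value of a counter-operation sequence equals the
maximal defined component of its counter profile; in particular it is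
invariant under reversing the word. -/
theorem maxVal_eq_maxEntry_profile :
    (∀ w : List Op, maxVal w = maxEntry (Profile w)) ∧
    (∀ w : List Op, maxVal w.reverse = maxVal w) := by
  constructor
  · intro w
    rw [maxVal_eq_foldr_blocks, maxEntry_profile]
  · intro w
    rw [maxVal_eq_foldr_blocks, maxVal_eq_foldr_blocks, blocks_reverse, foldr_max_reverse]
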